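/- Let V ⊆ ℂᴺ be a closed subvariety and U ⊆ {1,…,N}. Then π̄_U(V̄) ≠ (ℙ¹)ᵁ if and only if there exists a nonzero polynomial f in the vanishing ideal I(V) whose support involves only variables indexed by U; equivalently, π̄_U(V̄) = (ℙ¹)ᵁ if and only if I(V) ∩ ℂ[x_i : i ∈ U] = 0. -/

import Mathlib

open MvPolynomial

noncomputable section

/-- The complex projective line `ℙ¹`. -/
abbrev P1 := Projectivization ℂ (ℂ × ℂ)

/-- The standard affine chart `ℂ ↪ ℙ¹`, `x ↦ [x : 1]`. -/
def embedC (x : ℂ) : P1 :=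
  Projectivization.mk ℂ (x, 1) (by simp)

/-- The embedding `ℂᴺ ↪ (ℙ¹)ᴺ`, homogenizing each coordinate. -/
def embedAff {ι : Type*} (v : ι → ℂ) : ι → P1 := fun i => embedC (v i)

/-- `f` (in the doubled variables, `Sum.inl i` paired with `Sum.inr i`) is
multihomogeneous of multidegree `d`. -/
def MultiHomog {ι : Type*} (f : MvPolynomial (ι ⊕ ι) ℂ) (d : ι → ℕ) : Prop :=
  ∀ m ∈ f.support, ∀ i : ι, m (Sum.inl i) + m (Sum.inr i) = d i

/-- Evaluation of a polynomial in doubled variables at a point of `(ℙ¹)^ι`,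
using chosen homogeneous coordinates. -/
def pEval {ι : Type*} (f : MvPolynomial (ι ⊕ ι) ℂ) (p : ι → P1) : ℂ :=
  eval (Sum.elim (fun i => (p i).rep.1) (fun i => (p i).rep.2)) f

/-- Zariski-closed subsets of `(ℙ¹)^ι`: common zero sets of collections of
multihomogeneous polynomials. -/
def MClosed {ι : Type*} (C : Set (ι → P1)) : Prop :=
  ∃ F : Set (MvPolynomial (ι ⊕ ι) ℂ),
    (∀ f ∈ F, ∃ d : ι → ℕ, MultiHomog f d) ∧
    C = {p | ∀ f ∈ F, pEval f p = 0}

/-- The multiprojective (Zariski) closure of a subset of `(ℙ¹)^ι`. -/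
def mClosure {ι : Type*} (A : Set (ι → P1)) : Set (ι → P1) :=
  ⋂₀ {C | MClosed C ∧ A ⊆ C}

/-- Zariski-closed subsets of affine space `ℂ^ι`: zero sets of collections of
polynomials.  `IsAffineVariety V` says `V` is such a zero set. -/
def IsAffineVariety {ι : Type*} (V : Set (ι → ℂ)) : Prop :=
  ∃ F : Set (MvPolynomial ι ℂ), V = {x | ∀ f ∈ F, eval x f = 0}

/-- `V` is irreducible (in the Zariski topology on `ℂ^ι`). -/
def IsIrredVariety {ι : Type*} (V : Set (ι → ℂ)) : Prop :=
  V.Nonempty ∧ ∀ C₁ C₂ : Set (ι → ℂ), IsAffineVariety C₁ → IsAffineVariety C₂ →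
    V ⊆ C₁ ∪ C₂ → V ⊆ C₁ ∨ V ⊆ C₂

/-- The coordinate projection `(ℙ¹)^ι → (ℙ¹)^U`. -/
def projP {ι : Type*} (U : Set ι) (p : ι → P1) : U → P1 := fun u => p u

/-- The coordinate projection `π_U : V → ℂ^U` is dominant: its image is Zariski
dense, i.e. no nonzero polynomial in the variables indexed by `U` vanishes on it. -/
def DominantProj {ι : Type*} (V : Set (ι → ℂ)) (U : Set ι) : Prop :=
  ∀ f : MvPolynomial U ℂ, (∀ v ∈ V, eval (fun u : U => v u) f = 0) → f = 0

namespace Elim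
set_option linter.unusedSectionVars false

variable {ι : Type*}

lemma multiHomog_zero (d : ι → ℕ) : MultiHomog (0 : MvPolynomial (ι ⊕ ι) ℂ) d := by
  intro m hm
  simp at hm

lemma mh_add {f g : MvPolynomial (ι ⊕ ι) ℂ} {d : ι → ℕ}
    (hf : MultiHomog f d) (hg : MultiHomog g d) : MultiHomog (f + g) d := by
  classical
  intro m hm i
  rcases Finset.mem_union.1 (MvPolynomial.support_add hm) with h | h
  · exact hf m h i
  · exact hg m h i

lemma mh_smul {S : Type*} [SMulZeroClass S ℂ] {f : MvPolynomial (ι ⊕ ι) ℂ} {d : ι → ℕ}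
    (hf : MultiHomog f d) (a : S) : MultiHomog (a • f) d := by
  intro m hm i
  exact hf m (MvPolynomial.support_smul hm) i

lemma mh_mul {f g : MvPolynomial (ι ⊕ ι) ℂ} {d e : ι → ℕ}
    (hf : MultiHomog f d) (hg : MultiHomog g e) : MultiHomog (f * g) (d + e) := by
  classical
  intro m hm i
  rcases Finset.mem_add.1 (MvPolynomial.support_mul f g hm) with ⟨a, ha, b, hb, rfl⟩
  have := hf a ha i
  have := hg b hb i
  simp only [Finsupp.add_apply, Pi.add_apply]
  omega

lemma multiHomog_sum {α : Type*} (s : Finset α) (g : α → MvPolynomial (ι ⊕ ι) ℂ) (d : ι → ℕ)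
    (h : ∀ x ∈ s, MultiHomog (g x) d) : MultiHomog (∑ x ∈ s, g x) d := by
  classical
  induction s using Finset.induction with
  | empty => simpa using multiHomog_zero d
  | insert _ _ hx ih =>
    rw [Finset.sum_insert hx]
    exact mh_add (h _ (Finset.mem_insert_self _ _))
      (ih fun x hxs => h x (Finset.mem_insert_of_mem hxs))

lemma multiHomog_prod {α : Type*} (s : Finset α) (g : α → MvPolynomial (ι ⊕ ι) ℂ)
    (e : α → ι → ℕ) (h : ∀ x ∈ s, MultiHomog (g x) (e x)) :
    MultiHomog (∏ x ∈ s, g x) (∑ x ∈ s, e x) := by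
  classical
  induction s using Finset.induction with
  | empty =>
    simp only [Finset.prod_empty, Finset.sum_empty]
    intro m hm i
    have h1 := MvPolynomial.mem_support_iff.1 hm
    rw [MvPolynomial.coeff_one] at h1
    by_cases h : m = 0
    · subst h; simp
    · rw [if_neg (fun hh => h hh.symm)] at h1
      exact absurd rfl h1
  | insert _ _ hx ih =>
    rw [Finset.prod_insert hx, Finset.sum_insert hx]
    exact mh_mul (h _ (Finset.mem_insert_self _ _))
      (ih fun x hxs => h x (Finset.mem_insert_of_mem hxs))

variable [Fintype ι]

lemma eval_scale {f : MvPolynomial (ι ⊕ ι) ℂ} {d : ι → ℕ} (hf : MultiHomog f d)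
    (x : ι ⊕ ι → ℂ) (c : ι → ℂ) :
    eval (fun v => c (Sum.elim id id v) * x v) f = (∏ i, c i ^ d i) * eval x f := by
  rw [eval_eq', eval_eq', Finset.mul_sum]
  refine Finset.sum_congr rfl fun m hm => ?_
  have key : (∏ v, (c (Sum.elim id id v) * x v) ^ m v)
      = (∏ i, c i ^ d i) * ∏ v, x v ^ m v := by
    simp_rw [mul_pow]
    rw [Finset.prod_mul_distrib]
    congr 1
    rw [Fintype.prod_sum_type]
    simp only [Sum.elim_inl, Sum.elim_inr, id_eq]
    rw [← Finset.prod_mul_distrib]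
    refine Finset.prod_congr rfl fun i _ => ?_
    rw [← pow_add, hf m hm i]
  rw [key]; ring

lemma eval_congr_support {σ : Type*} [Fintype σ] {f : MvPolynomial σ ℂ} (x y : σ → ℂ)
    (h : ∀ m ∈ f.support, ∀ v, m v ≠ 0 → x v = y v) : eval x f = eval y f := by
  rw [eval_eq', eval_eq']
  refine Finset.sum_congr rfl fun m hm => ?_
  congr 1
  refine Finset.prod_congr rfl fun v _ => ?_
  by_cases hv : m v = 0
  · simp [hv]
  · rw [h m hm v hv]

lemma pEval_mk_eq {f : MvPolynomial (ι ⊕ ι) ℂ} {d : ι → ℕ} (hf : MultiHomog f d)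
    (p : ι → P1) (x : ι ⊕ ι → ℂ) (hne : ∀ i, (x (Sum.inl i), x (Sum.inr i)) ≠ 0)
    (hp : ∀ i, p i = Projectivization.mk ℂ (x (Sum.inl i), x (Sum.inr i)) (hne i)) :
    ∃ c : ι → ℂ, (∀ i, c i ≠ 0) ∧ pEval f p = (∏ i, c i ^ d i) * eval x f := by
  have hrep : ∀ i, ∃ a : ℂˣ, a • (x (Sum.inl i), x (Sum.inr i)) = (p i).rep := by
    intro i
    rw [hp i]
    exact Projectivization.exists_smul_eq_mk_rep ℂ _ (hne i)
  choose c hc using hrep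
  refine ⟨fun i => (c i : ℂ), fun i => (c i).ne_zero, ?_⟩
  have hX : (Sum.elim (fun i => (p i).rep.1) fun i => (p i).rep.2)
      = fun v => ((c (Sum.elim id id v) : ℂ)) * x v := by
    funext v
    cases v with
    | inl i =>
      simp only [Sum.elim_inl, ← hc i, Prod.smul_fst, Units.smul_def, smul_eq_mul, id_eq]
    | inr i =>
      simp only [Sum.elim_inr, ← hc i, Prod.smul_snd, Units.smul_def, smul_eq_mul, id_eq]
  unfold pEval
  rw [hX]
  simpa using eval_scale hf x (fun i => (c i : ℂ))

lemma pEval_embedAff {f : MvPolynomial (ι ⊕ ι) ℂ} {d : ι → ℕ} (hf : MultiHomog f d)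
    (w : ι → ℂ) :
    pEval f (embedAff w) = 0 ↔ eval (Sum.elim w fun _ : ι => (1:ℂ)) f = 0 := by
  set x : ι ⊕ ι → ℂ := Sum.elim w fun _ : ι => (1:ℂ) with hxdef
  have hne : ∀ i, (x (Sum.inl i), x (Sum.inr i)) ≠ 0 := by
    intro i
    simp [hxdef]
  have hp : ∀ i, embedAff w i = Projectivization.mk ℂ (x (Sum.inl i), x (Sum.inr i)) (hne i) := by
    intro i
    rfl
  obtain ⟨c, hc, heq⟩ := pEval_mk_eq hf (embedAff w) x hne hp
  rw [heq]
  constructor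
  · intro h
    rcases mul_eq_zero.1 h with h | h
    · exact absurd h (Finset.prod_ne_zero_iff.2 fun i _ => pow_ne_zero _ (hc i))
    · exact h
  · intro h; rw [h, mul_zero]

def ZSet (F : Set (MvPolynomial (ι ⊕ ι) ℂ)) : Set (ι → P1) := {p | ∀ f ∈ F, pEval f p = 0}

def Gmax (A : Set (ι → P1)) : Set (MvPolynomial (ι ⊕ ι) ℂ) :=
  {f | (∃ d, MultiHomog f d) ∧ ∀ a ∈ A, pEval f a = 0}

lemma subset_mClosure (A : Set (ι → P1)) : A ⊆ mClosure A := by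
  intro a ha C hC
  exact hC.2 ha

lemma mClosure_eq (A : Set (ι → P1)) : mClosure A = ZSet (Gmax A) := by
  apply le_antisymm
  · intro p hp
    refine hp _ ⟨⟨Gmax A, fun f hf => hf.1, rfl⟩, fun a ha f hf => hf.2 a ha⟩
  · rintro p hp C ⟨⟨F, hFd, rfl⟩, hAC⟩
    intro f hf
    exact hp f ⟨hFd f hf, fun a ha => hAC ha f hf⟩

lemma mem_mClosure {A : Set (ι → P1)} {p : ι → P1} (hp : p ∈ mClosure A)
    {f : MvPolynomial (ι ⊕ ι) ℂ} {d : ι → ℕ} (hf : MultiHomog f d)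
    (hvan : ∀ a ∈ A, pEval f a = 0) : pEval f p = 0 := by
  rw [mClosure_eq] at hp
  exact hp f ⟨⟨d, hf⟩, hvan⟩


section Homog

variable {ι : Type*} [Fintype ι] [DecidableEq ι]

/-- Exponent vector of the homogenization. -/
def emb (d : ι → ℕ) (m : ι →₀ ℕ) : (ι ⊕ ι) →₀ ℕ :=
  Finsupp.equivFunOnFinite.symm (Sum.elim (fun i => m i) (fun i => d i - m i))

@[simp] lemma emb_inl (d : ι → ℕ) (m : ι →₀ ℕ) (i : ι) : emb d m (Sum.inl i) = m i := rfl

@[simp] lemma emb_inr (d : ι → ℕ) (m : ι →₀ ℕ) (i : ι) : emb d m (Sum.inr i) = d i - m i := rfl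

/-- The multihomogenization of an affine polynomial. -/
def homog (f : MvPolynomial ι ℂ) : MvPolynomial (ι ⊕ ι) ℂ :=
  ∑ m ∈ f.support, monomial (emb (fun i => f.degreeOf i) m) (f.coeff m)

lemma mem_support_le_degreeOf {f : MvPolynomial ι ℂ} {m : ι →₀ ℕ} (hm : m ∈ f.support) (i : ι) :
    m i ≤ f.degreeOf i := by
  rw [MvPolynomial.degreeOf_eq_sup]
  exact Finset.le_sup (f := fun m => m i) hm

lemma multiHomog_homog (f : MvPolynomial ι ℂ) :
    MultiHomog (homog f) (fun i => f.degreeOf i) := by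
  apply multiHomog_sum
  intro m hm m' hm' i
  rw [MvPolynomial.support_monomial] at hm'
  by_cases hc : f.coeff m = 0
  · rw [if_pos hc] at hm'; simp at hm'
  · rw [if_neg hc] at hm'
    rw [Finset.mem_singleton] at hm'
    subst hm'
    simp only [emb_inl, emb_inr]
    have := mem_support_le_degreeOf hm i
    omega

lemma support_homog (f : MvPolynomial ι ℂ) :
    (homog f).support ⊆ f.support.image (emb (fun i => f.degreeOf i)) := by
  classical
  refine (MvPolynomial.support_sum).trans ?_
  intro m hm
  rw [Finset.mem_biUnion] at hm
  obtain ⟨m', hm', h⟩ := hm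
  rw [MvPolynomial.support_monomial] at h
  by_cases hc : f.coeff m' = 0
  · rw [if_pos hc] at h; simp at h
  · rw [if_neg hc, Finset.mem_singleton] at h
    subst h
    exact Finset.mem_image_of_mem _ hm'

/-- Dehomogenization: substitute `1` for every `inr` variable. -/
def dehom {σ : Type*} (f : MvPolynomial (σ ⊕ σ) ℂ) : MvPolynomial σ ℂ :=
  aeval (Sum.elim X fun _ : σ => (1 : MvPolynomial σ ℂ)) f

lemma eval_dehom {σ : Type*} (f : MvPolynomial (σ ⊕ σ) ℂ) (v : σ → ℂ) :
    eval v (dehom f) = eval (Sum.elim v fun _ : σ => (1:ℂ)) f := by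
  induction f using MvPolynomial.induction_on with
  | C a => simp [dehom]
  | add p q hp hq => simp only [dehom, map_add] at *; rw [hp, hq]
  | mul_X p j hp =>
    simp only [dehom, map_mul, MvPolynomial.aeval_X, MvPolynomial.eval_mul] at *
    rw [hp]
    cases j <;> simp

/-- Restriction of an exponent vector in doubled variables to the `inl` block. -/
def restr (m : (ι ⊕ ι) →₀ ℕ) : ι →₀ ℕ :=
  Finsupp.equivFunOnFinite.symm fun i => m (Sum.inl i)

@[simp] lemma restr_apply (m : (ι ⊕ ι) →₀ ℕ) (i : ι) : restr m i = m (Sum.inl i) := rfl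

lemma dehom_monomial (m : (ι ⊕ ι) →₀ ℕ) (c : ℂ) :
    dehom (monomial m c) = monomial (restr m) c := by
  rw [dehom, MvPolynomial.aeval_monomial, MvPolynomial.monomial_eq]
  congr 1
  rw [Finsupp.prod_fintype _ _ (fun j => pow_zero _), Finsupp.prod_fintype _ _ (fun j => pow_zero _),
    Fintype.prod_sum_type]
  simp

lemma dehom_eq_sum (f : MvPolynomial (ι ⊕ ι) ℂ) :
    dehom f = ∑ m ∈ f.support, monomial (restr m) (f.coeff m) := by
  conv_lhs => rw [f.as_sum]
  rw [dehom, map_sum]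
  exact Finset.sum_congr rfl fun m _ => dehom_monomial m _

lemma dehom_homog (f : MvPolynomial ι ℂ) : dehom (homog f) = f := by
  rw [homog, dehom, map_sum]
  conv_rhs => rw [f.as_sum]
  refine Finset.sum_congr rfl fun m hm => ?_
  have hd := dehom_monomial (emb (fun i => degreeOf i f) m) (coeff m f)
  rw [dehom] at hd
  rw [hd]
  have : restr (emb (fun i => degreeOf i f) m) = m := by
    ext i
    simp
  rw [this]

lemma homog_ne_zero {f : MvPolynomial ι ℂ} (hf : f ≠ 0) : homog f ≠ 0 := by
  intro h
  apply hf
  rw [← dehom_homog f, h, dehom, map_zero]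

lemma restr_inj_of_multiHomog {f : MvPolynomial (ι ⊕ ι) ℂ} {d : ι → ℕ} (hf : MultiHomog f d)
    {m m' : (ι ⊕ ι) →₀ ℕ} (hm : m ∈ f.support) (hm' : m' ∈ f.support)
    (h : restr m = restr m') : m = m' := by
  ext v
  cases v with
  | inl i => simpa using DFunLike.congr_fun h i
  | inr i =>
    have h1 := hf m hm i
    have h2 := hf m' hm' i
    have h3 : m (Sum.inl i) = m' (Sum.inl i) := by simpa using DFunLike.congr_fun h i
    omega

lemma dehom_ne_zero {f : MvPolynomial (ι ⊕ ι) ℂ} {d : ι → ℕ} (hf : MultiHomog f d)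
    (hne : f ≠ 0) : dehom f ≠ 0 := by
  obtain ⟨m, hm⟩ := (MvPolynomial.support_nonempty.2 hne)
  have hco : (dehom f).coeff (restr m) = f.coeff m := by
    rw [dehom_eq_sum]
    rw [MvPolynomial.coeff_sum]
    rw [Finset.sum_eq_single m]
    · rw [MvPolynomial.coeff_monomial, if_pos rfl]
    · intro m' hm' hne'
      rw [MvPolynomial.coeff_monomial, if_neg]
      intro heq
      exact hne' (restr_inj_of_multiHomog hf hm' hm heq)
    · intro h
      exact absurd hm h
  intro h
  rw [h] at hco
  simp only [MvPolynomial.coeff_zero] at hco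
  exact (MvPolynomial.mem_support_iff.1 hm) hco.symm

/-- `f` only involves (doubled) variables indexed by `S`. -/
def UsesOnly (S : Set ι) (f : MvPolynomial (ι ⊕ ι) ℂ) : Prop :=
  ∀ m ∈ f.support, ∀ i : ι, i ∉ S → m (Sum.inl i) = 0 ∧ m (Sum.inr i) = 0

lemma usesOnly_homog {f : MvPolynomial ι ℂ} {U : Set ι} (h : ↑f.vars ⊆ U) :
    UsesOnly U (homog f) := by
  intro m hm i hi
  obtain ⟨m', hm', rfl⟩ := Finset.mem_image.1 (support_homog f hm)
  have hmi : m' i = 0 := by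
    by_contra hne
    exact hi (h (MvPolynomial.mem_vars i |>.2 ⟨m', hm', Finsupp.mem_support_iff.2 hne⟩))
  have hdi : f.degreeOf i = 0 := by
    rw [MvPolynomial.degreeOf_eq_sup]
    refine Nat.le_zero.1 (Finset.sup_le fun m'' hm'' => Nat.le_zero.2 ?_)
    by_contra hne
    exact hi (h (MvPolynomial.mem_vars i |>.2 ⟨m'', hm'', Finsupp.mem_support_iff.2 hne⟩))
  simp [hmi, hdi]

lemma vars_dehom_subset {f : MvPolynomial (ι ⊕ ι) ℂ} {U : Set ι} (h : UsesOnly U f) :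
    ↑(dehom f).vars ⊆ U := by
  intro i hi
  simp only [Finset.coe_sort_coe, Finset.mem_coe] at hi
  obtain ⟨m0, hm0, hmem⟩ := (MvPolynomial.mem_vars i).1 hi
  by_contra hiU
  have hsup : (dehom f).support ⊆ f.support.image restr := by
    rw [dehom_eq_sum]
    classical
    refine (MvPolynomial.support_sum).trans ?_
    intro m hm
    rw [Finset.mem_biUnion] at hm
    obtain ⟨m', hm', hmem'⟩ := hm
    rw [MvPolynomial.support_monomial] at hmem'
    by_cases hc : f.coeff m' = 0
    · rw [if_pos hc] at hmem'; simp at hmem'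
    · rw [if_neg hc, Finset.mem_singleton] at hmem'
      subst hmem'
      exact Finset.mem_image_of_mem _ hm'
  obtain ⟨m', hm', rfl⟩ := Finset.mem_image.1 (hsup hm0)
  have := (h m' hm' i hiU).1
  rw [Finsupp.mem_support_iff] at hmem
  simp only [restr_apply] at hmem
  exact hmem this

end Homog


section OneVar

variable {ι : Type*} [Fintype ι] [DecidableEq ι]

/-- Kill the two variables attached to coordinate `j` in an exponent vector. -/
def mkill (j : ι) (m : (ι ⊕ ι) →₀ ℕ) : (ι ⊕ ι) →₀ ℕ :=
  Finsupp.equivFunOnFinite.symm fun v =>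
    if v = Sum.inl j ∨ v = Sum.inr j then 0 else m v

@[simp] lemma mkill_apply (j : ι) (m : (ι ⊕ ι) →₀ ℕ) (v : ι ⊕ ι) :
    mkill j m v = if v = Sum.inl j ∨ v = Sum.inr j then 0 else m v := rfl

/-- The substitution turning `x_j` into `X`, `y_j` into `1`, and leaving all other
variables as constants. -/
def sub1 (j : ι) : ι ⊕ ι → Polynomial (MvPolynomial (ι ⊕ ι) ℂ) := fun v =>
  if v = Sum.inl j then Polynomial.X
  else if v = Sum.inr j then 1
  else Polynomial.C (X v)

/-- `f` viewed as a polynomial in the (dehomogenized) `j`-th coordinate. -/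
def Phi (j : ι) : MvPolynomial (ι ⊕ ι) ℂ →ₐ[ℂ] Polynomial (MvPolynomial (ι ⊕ ι) ℂ) :=
  aeval (sub1 j)

lemma phi_monomial (j : ι) (m : (ι ⊕ ι) →₀ ℕ) (c : ℂ) :
    Phi j (monomial m c) =
      Polynomial.C (monomial (mkill j m) c) * Polynomial.X ^ (m (Sum.inl j)) := by
  rw [Phi, MvPolynomial.aeval_monomial, Finsupp.prod_fintype _ _ (fun v => pow_zero _)]
  have hmem1 : (Sum.inl j : ι ⊕ ι) ∈ (Finset.univ : Finset (ι ⊕ ι)) := Finset.mem_univ _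
  have hmem2 : (Sum.inr j : ι ⊕ ι) ∈ (Finset.univ.erase (Sum.inl j) : Finset (ι ⊕ ι)) := by
    refine Finset.mem_erase.2 ⟨by simp, Finset.mem_univ _⟩
  rw [← Finset.mul_prod_erase _ _ hmem1, ← Finset.mul_prod_erase _ _ hmem2]
  have h1 : sub1 j (Sum.inl j) = Polynomial.X := by simp [sub1]
  have h2 : sub1 j (Sum.inr j) = 1 := by simp [sub1]
  rw [h1, h2, one_pow]
  have h3 : ∀ v ∈ (Finset.univ.erase (Sum.inl j)).erase (Sum.inr j),
      sub1 j v ^ m v = Polynomial.C (X v ^ m v) := by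
    intro v hv
    rw [Finset.mem_erase, Finset.mem_erase] at hv
    rw [sub1, if_neg hv.2.1, if_neg hv.1, map_pow]
  rw [Finset.prod_congr rfl h3, ← map_prod]
  have h4 : monomial (mkill j m) c
      = C c * ∏ v ∈ (Finset.univ.erase (Sum.inl j)).erase (Sum.inr j), X v ^ m v := by
    rw [MvPolynomial.monomial_eq, Finsupp.prod_fintype _ _ (fun v => pow_zero _)]
    congr 1
    rw [← Finset.mul_prod_erase _ (fun v => (X v : MvPolynomial (ι ⊕ ι) ℂ) ^ mkill j m v) hmem1,
      ← Finset.mul_prod_erase _ _ hmem2]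
    have e1 : mkill j m (Sum.inl j) = 0 := by simp
    have e2 : mkill j m (Sum.inr j) = 0 := by simp
    rw [e1, e2, pow_zero, pow_zero, one_mul, one_mul]
    refine Finset.prod_congr rfl fun v hv => ?_
    rw [Finset.mem_erase, Finset.mem_erase] at hv
    rw [mkill_apply, if_neg (by tauto)]
  rw [h4, map_mul, Polynomial.algebraMap_apply, MvPolynomial.algebraMap_eq]
  ring

/-- The `k`-th coefficient polynomial of `f` w.r.t. coordinate `j`. -/
def coefPoly (j : ι) (f : MvPolynomial (ι ⊕ ι) ℂ) (k : ℕ) : MvPolynomial (ι ⊕ ι) ℂ :=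
  (Phi j f).coeff k

lemma coefPoly_eq_sum (j : ι) (f : MvPolynomial (ι ⊕ ι) ℂ) (k : ℕ) :
    coefPoly j f k = ∑ m ∈ f.support,
      (if m (Sum.inl j) = k then monomial (mkill j m) (f.coeff m) else 0) := by
  rw [coefPoly]
  conv_lhs => rw [f.as_sum, map_sum, Polynomial.finset_sum_coeff]
  refine Finset.sum_congr rfl fun m hm => ?_
  rw [phi_monomial, Polynomial.coeff_C_mul, Polynomial.coeff_X_pow]
  by_cases h : m (Sum.inl j) = k
  · rw [if_pos h.symm, if_pos h, mul_one]
  · rw [if_neg (fun hh => h hh.symm), if_neg h, mul_zero]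

lemma natDegree_phi_le {j : ι} {f : MvPolynomial (ι ⊕ ι) ℂ} {d : ι → ℕ}
    (hf : MultiHomog f d) : (Phi j f).natDegree ≤ d j := by
  conv_lhs => rw [f.as_sum, map_sum]
  refine (Polynomial.natDegree_sum_le _ _).trans ?_
  rw [Finset.fold_max_le]
  refine ⟨Nat.zero_le _, fun m hm => ?_⟩
  rw [Function.comp_apply, phi_monomial]
  refine (Polynomial.natDegree_C_mul_le _ _).trans ?_
  rw [Polynomial.natDegree_X_pow]
  have := hf m hm j
  omega

lemma multiHomog_coefPoly {j : ι} {f : MvPolynomial (ι ⊕ ι) ℂ} {d : ι → ℕ}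
    (hf : MultiHomog f d) (k : ℕ) :
    MultiHomog (coefPoly j f k) (Function.update d j 0) := by
  rw [coefPoly_eq_sum]
  refine multiHomog_sum _ _ _ fun m hm => ?_
  by_cases h : m (Sum.inl j) = k
  · rw [if_pos h]
    intro m' hm' i
    rw [MvPolynomial.support_monomial] at hm'
    by_cases hc : f.coeff m = 0
    · rw [if_pos hc] at hm'; simp at hm'
    · rw [if_neg hc, Finset.mem_singleton] at hm'
      subst hm'
      by_cases hij : i = j
      · subst hij
        simp [Function.update_self]
      · have := hf m hm i
        simp only [mkill_apply]
        rw [if_neg (by simp [hij]), if_neg (by simp [hij]), Function.update_of_ne hij]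
        exact this
  · rw [if_neg h]
    exact multiHomog_zero _
  
lemma usesOnly_coefPoly {j : ι} {f : MvPolynomial (ι ⊕ ι) ℂ} {W : Set ι}
    (hf : UsesOnly W f) (k : ℕ) :
    UsesOnly (W \ {j}) (coefPoly j f k) := by
  rw [coefPoly_eq_sum]
  intro m0 hm0 i hi
  classical
  have := MvPolynomial.support_sum hm0
  rw [Finset.mem_biUnion] at this
  obtain ⟨m, hm, hmem⟩ := this
  by_cases h : m (Sum.inl j) = k
  · rw [if_pos h, MvPolynomial.support_monomial] at hmem
    by_cases hc : f.coeff m = 0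
    · rw [if_pos hc] at hmem; simp at hmem
    · rw [if_neg hc, Finset.mem_singleton] at hmem
      subst hmem
      by_cases hij : i = j
      · subst hij; simp
      · have hiW : i ∉ W := fun hW => hi ⟨hW, hij⟩
        have := hf m hm i hiW
        simp only [mkill_apply]
        rw [if_neg (by simp [hij]), if_neg (by simp [hij])]
        exact this
  · rw [if_neg h] at hmem
    simp at hmem

/-- Homogeneous evaluation of a (≤ D)-degree polynomial at `(a, b)`. -/
def homEvalM (a b : ℂ) (D : ℕ) (P : Polynomial ℂ) : ℂ :=
  ∑ k ∈ Finset.range (D+1), P.coeff k * a^k * b^(D - k)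

/-- The specialization of `f` at `x` as a polynomial in the `j`-th coordinate. -/
def psi (j : ι) (x : ι ⊕ ι → ℂ) (f : MvPolynomial (ι ⊕ ι) ℂ) : Polynomial ℂ :=
  Polynomial.map (eval x) (Phi j f)

lemma psi_coeff (j : ι) (x : ι ⊕ ι → ℂ) (f : MvPolynomial (ι ⊕ ι) ℂ) (k : ℕ) :
    (psi j x f).coeff k = eval x (coefPoly j f k) := by
  rw [psi, Polynomial.coeff_map, coefPoly]

lemma natDegree_psi_le {j : ι} {x : ι ⊕ ι → ℂ} {f : MvPolynomial (ι ⊕ ι) ℂ} {d : ι → ℕ}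
    (hf : MultiHomog f d) : (psi j x f).natDegree ≤ d j :=
  le_trans Polynomial.natDegree_map_le (natDegree_phi_le hf)


lemma eval_monomial_fintype (x : ι ⊕ ι → ℂ) (m : (ι ⊕ ι) →₀ ℕ) (c : ℂ) :
    eval x (monomial m c) = c * ∏ v, x v ^ m v := by
  rw [MvPolynomial.eval_monomial, Finsupp.prod_fintype _ _ (fun v => pow_zero _)]

/-- Key compatibility: evaluation of a multihomogeneous polynomial decomposes through
its coefficient polynomials w.r.t. coordinate `j`. -/
lemma eval_eq_homEvalM {j : ι} {f : MvPolynomial (ι ⊕ ι) ℂ} {d : ι → ℕ}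
    (hf : MultiHomog f d) (x : ι ⊕ ι → ℂ) :
    eval x f = homEvalM (x (Sum.inl j)) (x (Sum.inr j)) (d j) (psi j x f) := by
  have hco : ∀ k, (psi j x f).coeff k = ∑ m ∈ f.support,
      (if m (Sum.inl j) = k then eval x (monomial (mkill j m) (f.coeff m)) else 0) := by
    intro k
    rw [psi_coeff, coefPoly_eq_sum, map_sum]
    refine Finset.sum_congr rfl fun m hm => ?_
    split
    · rfl
    · rw [map_zero]
  rw [homEvalM]
  conv_lhs => rw [f.as_sum, map_sum]
  simp_rw [hco, Finset.sum_mul]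
  rw [Finset.sum_comm]
  refine Finset.sum_congr rfl fun m hm => ?_
  have hj := hf m hm j
  have hmem : m (Sum.inl j) ∈ Finset.range (d j + 1) := Finset.mem_range.2 (by omega)
  rw [Finset.sum_eq_single (m (Sum.inl j))]
  · rw [if_pos rfl, eval_monomial_fintype, eval_monomial_fintype]
    have hsplit : ∏ v, x v ^ m v =
        (∏ v, x v ^ mkill j m v) * x (Sum.inl j) ^ m (Sum.inl j)
          * x (Sum.inr j) ^ m (Sum.inr j) := by
      have hmem1 : (Sum.inl j : ι ⊕ ι) ∈ (Finset.univ : Finset (ι ⊕ ι)) := Finset.mem_univ _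
      have hmem2 : (Sum.inr j : ι ⊕ ι) ∈ (Finset.univ.erase (Sum.inl j) : Finset (ι ⊕ ι)) :=
        Finset.mem_erase.2 ⟨by simp, Finset.mem_univ _⟩
      rw [← Finset.mul_prod_erase _ (fun v => x v ^ m v) hmem1,
        ← Finset.mul_prod_erase _ _ hmem2,
        ← Finset.mul_prod_erase _ (fun v => x v ^ mkill j m v) hmem1,
        ← Finset.mul_prod_erase _ _ hmem2]
      have e1 : mkill j m (Sum.inl j) = 0 := by simp
      have e2 : mkill j m (Sum.inr j) = 0 := by simp
      rw [e1, e2, pow_zero, pow_zero, one_mul, one_mul]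
      have : ∀ v ∈ (Finset.univ.erase (Sum.inl j)).erase (Sum.inr j),
          x v ^ mkill j m v = x v ^ m v := by
        intro v hv
        rw [Finset.mem_erase, Finset.mem_erase] at hv
        rw [mkill_apply, if_neg (by tauto)]
      rw [Finset.prod_congr rfl this]
      ring
    rw [hsplit]
    have : d j - m (Sum.inl j) = m (Sum.inr j) := by omega
    rw [this]
    ring
  · intro k hk hne
    rw [if_neg (fun h => hne h.symm), zero_mul, zero_mul]
  · intro h
    exact absurd hmem h

lemma homEvalM_stretch {a b : ℂ} {P : Polynomial ℂ} {D M : ℕ}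
    (hP : P.natDegree ≤ D) (hDM : D ≤ M) :
    homEvalM a b M P = b ^ (M - D) * homEvalM a b D P := by
  rw [homEvalM, homEvalM, Finset.mul_sum]
  rw [← Finset.sum_subset (Finset.range_subset_range.2 (by omega) :
    Finset.range (D+1) ⊆ Finset.range (M+1))]
  · refine Finset.sum_congr rfl fun k hk => ?_
    rw [Finset.mem_range] at hk
    have : M - k = (M - D) + (D - k) := by omega
    rw [this, pow_add]
    ring
  · intro k hk hk'
    rw [Finset.mem_range] at hk
    rw [Finset.mem_range, not_lt] at hk'
    rw [Polynomial.coeff_eq_zero_of_natDegree_lt (by omega), zero_mul, zero_mul]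

lemma homEvalM_mul_X (a b : ℂ) (P : Polynomial ℂ) (M : ℕ) :
    homEvalM a b (M + 1) (P * Polynomial.X) = a * homEvalM a b M P := by
  rw [homEvalM, homEvalM, Finset.sum_range_succ', Finset.mul_sum]
  rw [Polynomial.coeff_mul_X_zero, zero_mul, zero_mul, add_zero]
  refine Finset.sum_congr rfl fun k hk => ?_
  rw [Polynomial.coeff_mul_X]
  have : M + 1 - (k + 1) = M - k := by omega
  rw [this]
  ring

lemma homEvalM_mul_X_pow (a b : ℂ) (P : Polynomial ℂ) (M jj : ℕ) :
    homEvalM a b (M + jj) (P * Polynomial.X ^ jj) = a ^ jj * homEvalM a b M P := by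
  induction jj with
  | zero => simp
  | succ n ih =>
    have : P * Polynomial.X ^ (n + 1) = (P * Polynomial.X ^ n) * Polynomial.X := by ring
    rw [this, show M + (n+1) = (M + n) + 1 from rfl, homEvalM_mul_X, ih]
    ring

lemma homEvalM_smul (c a b : ℂ) (D : ℕ) (P : Polynomial ℂ) :
    homEvalM (c * a) (c * b) D P = c ^ D * homEvalM a b D P := by
  rw [homEvalM, homEvalM, Finset.mul_sum]
  refine Finset.sum_congr rfl fun k hk => ?_
  rw [Finset.mem_range] at hk
  rw [mul_pow, mul_pow]
  have : c ^ D = c ^ k * c ^ (D - k) := by rw [← pow_add]; congr 1; omega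
  rw [this]
  ring

lemma homEvalM_one {a : ℂ} {P : Polynomial ℂ} {D : ℕ} (hP : P.natDegree ≤ D) :
    homEvalM a 1 D P = P.eval a := by
  rw [homEvalM, Polynomial.eval_eq_sum_range' (Nat.lt_succ_of_le hP)]
  refine Finset.sum_congr rfl fun k hk => ?_
  rw [one_pow, mul_one]

lemma homEvalM_inf (P : Polynomial ℂ) (D : ℕ) :
    homEvalM 1 0 D P = P.coeff D := by
  rw [homEvalM]
  rw [Finset.sum_eq_single D]
  · simp
  · intro k hk hne
    rw [Finset.mem_range] at hk
    rw [zero_pow (by omega : D - k ≠ 0), mul_zero]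
  · intro h
    exact absurd (Finset.self_mem_range_succ D) h

end OneVar


section SpanLemma

variable {α : Type*}

/-- The key (binary-form Nullstellensatz) span lemma: if a family of polynomials,
viewed as binary forms of formal degrees `D f`, has no common projective zero, then
for some `M` the shifts `P f * X ^ jj` span all polynomials of degree ≤ `M`. -/
lemma span_lemma (S : Set α) (P : α → Polynomial ℂ) (D : α → ℕ)
    (hdeg : ∀ f ∈ S, (P f).natDegree ≤ D f)
    (hnz : ∀ a b : ℂ, (a, b) ≠ 0 → ∃ f ∈ S, homEvalM a b (D f) (P f) ≠ 0) :
    ∃ M : ℕ, ∀ E : Polynomial ℂ, E.natDegree ≤ M →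
      E ∈ Submodule.span ℂ
        {g | ∃ f ∈ S, ∃ jj, jj + D f ≤ M ∧ g = P f * Polynomial.X ^ jj} := by
  classical
  -- a member with nonvanishing top coefficient
  obtain ⟨f0, hf0S, hlc⟩ : ∃ f ∈ S, (P f).coeff (D f) ≠ 0 := by
    obtain ⟨f, hfS, hf⟩ := hnz 1 0 (by simp)
    exact ⟨f, hfS, by rwa [homEvalM_inf] at hf⟩
  have hnd0 : (P f0).natDegree = D f0 :=
    le_antisymm (hdeg f0 hf0S) (Polynomial.le_natDegree_of_ne_zero hlc)
  have hP0ne : P f0 ≠ 0 := fun h => hlc (by rw [h]; simp)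
  -- no common affine root
  have hB : ∀ a : ℂ, ∃ f ∈ S, (P f).eval a ≠ 0 := by
    intro a
    obtain ⟨f, hfS, hf⟩ := hnz a 1 (by simp)
    exact ⟨f, hfS, by rwa [homEvalM_one (hdeg f hfS)] at hf⟩
  -- the ideal generated by the family is everything
  have hI : Ideal.span (P '' S) = ⊤ := by
    by_contra hne
    obtain ⟨g, hg⟩ := (IsPrincipalIdealRing.principal (Ideal.span (P '' S))).principal
    by_cases hg0 : g = 0
    · have hmem : P f0 ∈ Ideal.span (P '' S) :=
        Ideal.subset_span (Set.mem_image_of_mem _ hf0S)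
      rw [hg, hg0, Submodule.span_zero_singleton, Submodule.mem_bot] at hmem
      exact hP0ne hmem
    · have hgu : ¬IsUnit g := by
        intro hu
        exact hne (hg.trans (Ideal.span_singleton_eq_top.2 hu))
      have hdeg0 : g.degree ≠ 0 := fun h =>
        hgu (Polynomial.isUnit_iff_degree_eq_zero.2 h)
      obtain ⟨a, ha⟩ := IsAlgClosed.exists_root g hdeg0
      obtain ⟨f, hfS, hf⟩ := hB a
      have hmem : P f ∈ Ideal.span (P '' S) :=
        Ideal.subset_span (Set.mem_image_of_mem _ hfS)
      rw [hg] at hmem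
      have hmem' : P f ∈ Ideal.span {g} := hmem
      obtain ⟨u, hu⟩ := Ideal.mem_span_singleton'.1 hmem'
      apply hf
      rw [← hu, Polynomial.eval_mul, ha, mul_zero]
  -- a finite Bezout combination for 1
  have h1 : (1 : Polynomial ℂ) ∈ Submodule.span (Polynomial ℂ) (P '' S) := by
    rw [← Ideal.span]
    exact (Ideal.eq_top_iff_one _).1 hI
  obtain ⟨c, hcsupp, hcsum⟩ := Submodule.mem_span_set.1 h1
  have hpick : ∀ g ∈ c.support, ∃ f, f ∈ S ∧ P f = g := by
    intro g hg
    obtain ⟨f, hfS, hPf⟩ := hcsupp hg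
    exact ⟨f, hfS, hPf⟩
  set e := D f0 with he
  set B := c.support.attach.sup
    (fun g => (c g.1).natDegree + D (hpick g.1 g.2).choose) with hBdef
  refine ⟨e + B + 1, ?_⟩
  set M := e + B + 1 with hM
  set T : Set (Polynomial ℂ) :=
    {g | ∃ f ∈ S, ∃ jj, jj + D f ≤ M ∧ g = P f * Polynomial.X ^ jj} with hT
  -- multiples with controlled degree lie in the span
  have claim1 : ∀ (Q : Polynomial ℂ) (f : α), f ∈ S → Q.natDegree + D f ≤ M →
      Q * P f ∈ Submodule.span ℂ T := by
    intro Q f hfS hQ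
    have hQsum : Q * P f = ∑ jj ∈ Finset.range (Q.natDegree + 1),
        Q.coeff jj • (P f * Polynomial.X ^ jj) := by
      conv_lhs => rw [Q.as_sum_range_C_mul_X_pow, Finset.sum_mul]
      refine Finset.sum_congr rfl fun jj hjj => ?_
      rw [Polynomial.smul_eq_C_mul]
      ring
    rw [hQsum]
    refine Submodule.sum_mem _ fun jj hjj => Submodule.smul_mem _ _ (Submodule.subset_span ?_)
    rw [Finset.mem_range] at hjj
    exact ⟨f, hfS, jj, by omega, rfl⟩
  intro E hE
  -- divide by the distinguished element
  have hmonic : (P f0 * Polynomial.C ((P f0).leadingCoeff)⁻¹).Monic :=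
    Polynomial.monic_mul_leadingCoeff_inv hP0ne
  set P0' := P f0 * Polynomial.C ((P f0).leadingCoeff)⁻¹ with hP0'
  have hndP0' : P0'.natDegree = e := by
    have hdeg' : P0'.degree = (P f0).degree :=
      Polynomial.degree_mul_leadingCoeff_inv (P f0) hP0ne
    rw [← hnd0]
    exact Polynomial.natDegree_eq_of_degree_eq hdeg'
  set R := E %ₘ P0' with hR
  set Q := E /ₘ P0' with hQ
  have hERQ : E = R + P0' * Q := (Polynomial.modByMonic_add_div E P0').symm
  have hQmem : P0' * Q ∈ Submodule.span ℂ T := by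
    have : P0' * Q = (Polynomial.C ((P f0).leadingCoeff)⁻¹ * Q) * P f0 := by
      rw [hP0']; ring
    rw [this]
    refine claim1 _ f0 hf0S ?_
    have h1 : (Polynomial.C ((P f0).leadingCoeff)⁻¹ * Q).natDegree ≤ Q.natDegree :=
      Polynomial.natDegree_C_mul_le _ _
    have h2 : Q.natDegree = E.natDegree - P0'.natDegree :=
      Polynomial.natDegree_divByMonic E hmonic
    rw [hndP0'] at h2
    omega
  have hRdeg : R.natDegree ≤ e := by
    have := Polynomial.degree_modByMonic_lt E hmonic
    rw [← hR] at this
    by_cases hR0 : R = 0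
    · rw [hR0]; simp
    · have : R.degree < (e : WithBot ℕ) := by
        rwa [Polynomial.degree_eq_natDegree hmonic.ne_zero, hndP0'] at this
      exact Polynomial.natDegree_le_iff_degree_le.2 this.le
  have hRmem : R ∈ Submodule.span ℂ T := by
    have hR1 : R = ∑ g ∈ c.support.attach, (R * c g.1) * g.1 := by
      conv_lhs => rw [← mul_one R, ← hcsum]
      rw [Finsupp.sum, Finset.mul_sum, ← Finset.sum_attach c.support
        (fun g => R * (c g • g))]
      refine Finset.sum_congr rfl fun g _ => ?_
      rw [smul_eq_mul]
      ring
    rw [hR1]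
    refine Submodule.sum_mem _ fun g _ => ?_
    obtain ⟨hfS, hPf⟩ := (hpick g.1 g.2).choose_spec
    have hb : (R * c g.1).natDegree + D (hpick g.1 g.2).choose ≤ M := by
      have h2 : (R * c g.1).natDegree ≤ R.natDegree + (c g.1).natDegree :=
        Polynomial.natDegree_mul_le
      have h3 : (c g.1).natDegree + D (hpick g.1 g.2).choose ≤ B :=
        Finset.le_sup (f := fun g => (c g.1).natDegree + D (hpick g.1 g.2).choose)
          (Finset.mem_attach _ g)
      omega
    have hmem := claim1 (R * c g.1) _ hfS hb
    rwa [hPf] at hmem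
  rw [hERQ]
  exact Submodule.add_mem _ hRmem hQmem

end SpanLemma


section ElimOne

variable {ι : Type*} [Fintype ι] [DecidableEq ι]

/-- Closed sets cut out by multihomogeneous polynomials using only `W`-variables. -/
def ClosedOn (W : Set ι) (C : Set (ι → P1)) : Prop :=
  ∃ F : Set (MvPolynomial (ι ⊕ ι) ℂ),
    (∀ f ∈ F, ∃ d : ι → ℕ, MultiHomog f d) ∧ (∀ f ∈ F, UsesOnly W f) ∧
    C = {p | ∀ f ∈ F, pEval f p = 0}

lemma multiHomog_C (c : ℂ) : MultiHomog (C c : MvPolynomial (ι ⊕ ι) ℂ) (fun _ => 0) := by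
  intro m hm i
  rw [MvPolynomial.mem_support_iff, MvPolynomial.coeff_C] at hm
  by_cases h : m = 0
  · subst h; simp
  · rw [if_neg (fun hh => h hh.symm)] at hm
    exact absurd rfl hm

lemma multiHomog_intCast (n : ℤ) :
    MultiHomog ((n : MvPolynomial (ι ⊕ ι) ℂ)) (fun _ => 0) := by
  have : ((n : ℤ) : MvPolynomial (ι ⊕ ι) ℂ) = C ((n : ℤ) : ℂ) := (map_intCast (C : ℂ →+* MvPolynomial (ι ⊕ ι) ℂ) n).symm
  rw [this]
  exact multiHomog_C _

lemma usesOnly_zero (W : Set ι) : UsesOnly W (0 : MvPolynomial (ι ⊕ ι) ℂ) := by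
  intro m hm
  simp at hm

lemma usesOnly_C (W : Set ι) (c : ℂ) : UsesOnly W (C c : MvPolynomial (ι ⊕ ι) ℂ) := by
  intro m hm i hi
  rw [MvPolynomial.mem_support_iff, MvPolynomial.coeff_C] at hm
  by_cases h : m = 0
  · subst h; simp
  · rw [if_neg (fun hh => h hh.symm)] at hm
    exact absurd rfl hm

lemma usesOnly_intCast (W : Set ι) (n : ℤ) :
    UsesOnly W ((n : MvPolynomial (ι ⊕ ι) ℂ)) := by
  have : ((n : ℤ) : MvPolynomial (ι ⊕ ι) ℂ) = C ((n : ℤ) : ℂ) := (map_intCast (C : ℂ →+* MvPolynomial (ι ⊕ ι) ℂ) n).symm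
  rw [this]
  exact usesOnly_C _ _

lemma usesOnly_mul {W : Set ι} {f g : MvPolynomial (ι ⊕ ι) ℂ}
    (hf : UsesOnly W f) (hg : UsesOnly W g) : UsesOnly W (f * g) := by
  classical
  intro m hm i hi
  rcases Finset.mem_add.1 (MvPolynomial.support_mul f g hm) with ⟨a, ha, b, hb, rfl⟩
  have h1 := hf a ha i hi
  have h2 := hg b hb i hi
  constructor <;> simp [Finsupp.add_apply, h1.1, h1.2, h2.1, h2.2]

lemma usesOnly_sum {α : Type*} {W : Set ι} (s : Finset α) (g : α → MvPolynomial (ι ⊕ ι) ℂ)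
    (h : ∀ x ∈ s, UsesOnly W (g x)) : UsesOnly W (∑ x ∈ s, g x) := by
  classical
  intro m hm i hi
  have := MvPolynomial.support_sum hm
  rw [Finset.mem_biUnion] at this
  obtain ⟨x, hx, hmem⟩ := this
  exact h x hx m hmem i hi

lemma usesOnly_prod {α : Type*} {W : Set ι} (s : Finset α) (g : α → MvPolynomial (ι ⊕ ι) ℂ)
    (h : ∀ x ∈ s, UsesOnly W (g x)) : UsesOnly W (∏ x ∈ s, g x) := by
  classical
  induction s using Finset.induction with
  | empty =>
    rw [Finset.prod_empty]
    intro m hm i hi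
    have h1 := MvPolynomial.mem_support_iff.1 hm
    rw [MvPolynomial.coeff_one] at h1
    by_cases hh : m = 0
    · subst hh; simp
    · rw [if_neg (fun hhh => hh hhh.symm)] at h1
      exact absurd rfl h1
  | insert _ _ hx ih =>
    rw [Finset.prod_insert hx]
    exact usesOnly_mul (h _ (Finset.mem_insert_self _ _))
      (ih fun x hxs => h x (Finset.mem_insert_of_mem hxs))

/-- The reps coordinates of a point of `(ℙ¹)^ι`. -/
def rp (p : ι → P1) : ι ⊕ ι → ℂ :=
  Sum.elim (fun i => (p i).rep.1) (fun i => (p i).rep.2)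

lemma pEval_eq_rp (f : MvPolynomial (ι ⊕ ι) ℂ) (p : ι → P1) : pEval f p = eval (rp p) f := rfl

/-- Entry polynomials of the elimination matrices. -/
def Ent (j : ι) (f : MvPolynomial (ι ⊕ ι) ℂ) (jj k : ℕ) : MvPolynomial (ι ⊕ ι) ℂ :=
  (Phi j f * Polynomial.X ^ jj).coeff k

lemma ent_eq (j : ι) (f : MvPolynomial (ι ⊕ ι) ℂ) (jj k : ℕ) :
    Ent j f jj k = if jj ≤ k then coefPoly j f (k - jj) else 0 := by
  rw [Ent, Polynomial.coeff_mul_X_pow']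
  split <;> rfl

lemma multiHomog_ent {j : ι} {f : MvPolynomial (ι ⊕ ι) ℂ} {d : ι → ℕ}
    (hf : MultiHomog f d) (jj k : ℕ) :
    MultiHomog (Ent j f jj k) (Function.update d j 0) := by
  rw [ent_eq]
  split
  · exact multiHomog_coefPoly hf _
  · exact multiHomog_zero _

lemma usesOnly_ent {j : ι} {f : MvPolynomial (ι ⊕ ι) ℂ} {W : Set ι}
    (hf : UsesOnly W f) (jj k : ℕ) :
    UsesOnly (W \ {j}) (Ent j f jj k) := by
  rw [ent_eq]
  split
  · exact usesOnly_coefPoly hf _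
  · exact usesOnly_zero _

lemma eval_ent (j : ι) (x : ι ⊕ ι → ℂ) (f : MvPolynomial (ι ⊕ ι) ℂ) (jj k : ℕ) :
    eval x (Ent j f jj k) = (psi j x f * Polynomial.X ^ jj).coeff k := by
  rw [Ent, ← Polynomial.coeff_map, Polynomial.map_mul, Polynomial.map_pow, Polynomial.map_X, psi]

lemma psi_congr {j : ι} {W : Set ι} {f : MvPolynomial (ι ⊕ ι) ℂ} (hfU : UsesOnly W f)
    (x y : ι ⊕ ι → ℂ) (h : ∀ v, Sum.elim id id v ≠ j → x v = y v) :
    psi j x f = psi j y f := by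
  refine Polynomial.ext fun k => ?_
  rw [psi_coeff, psi_coeff]
  refine eval_congr_support x y fun m hm v hv => ?_
  refine h v ?_
  have hU := usesOnly_coefPoly hfU k m hm
  cases v with
  | inl i =>
    intro hij
    have : i ∉ W \ {j} := fun hmem => hmem.2 hij
    exact hv (hU i this).1
  | inr i =>
    intro hij
    have : i ∉ W \ {j} := fun hmem => hmem.2 hij
    exact hv (hU i this).2

lemma rp_update (p : ι → P1) (j : ι) (z : P1) :
    ∀ v, Sum.elim id id v ≠ j → rp (Function.update p j z) v = rp p v := by
  intro v hv
  cases v with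
  | inl i =>
    simp only [rp, Sum.elim_inl] at *
    rw [Function.update_of_ne (show i ≠ j by simpa using hv)]
  | inr i =>
    simp only [rp, Sum.elim_inr] at *
    rw [Function.update_of_ne (show i ≠ j by simpa using hv)]

/-- Evaluation at an updated point through `homEvalM`. -/
lemma pEval_update {p : ι → P1} {j : ι} {z : P1} {f : MvPolynomial (ι ⊕ ι) ℂ}
    {d : ι → ℕ} {W : Set ι} (hf : MultiHomog f d) (hfU : UsesOnly W f) :
    pEval f (Function.update p j z) = homEvalM z.rep.1 z.rep.2 (d j) (psi j (rp p) f) := by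
  rw [pEval_eq_rp, eval_eq_homEvalM hf (rp (Function.update p j z))]
  have h1 : rp (Function.update p j z) (Sum.inl j) = z.rep.1 := by
    simp [rp]
  have h2 : rp (Function.update p j z) (Sum.inr j) = z.rep.2 := by
    simp [rp]
  rw [h1, h2, psi_congr hfU _ _ (rp_update p j z)]


lemma elim_one {W : Set ι} {C : Set (ι → P1)} (hC : ClosedOn W C) (j : ι) :
    ClosedOn (W \ {j}) {p | ∃ z : P1, Function.update p j z ∈ C} := by
  classical
  obtain ⟨F, hFd, hFu, rfl⟩ := hC
  have hDd : ∀ f : ↥F, ∃ d : ι → ℕ, MultiHomog f.1 d := fun f => hFd f.1 f.2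
  choose Dd hDd using hDd
  set F' : Set (MvPolynomial (ι ⊕ ι) ℂ) :=
    {g | ∃ (M : ℕ) (ρ : Fin (M+1) → ↥F × ℕ),
      (∀ r, (ρ r).2 + Dd (ρ r).1 j ≤ M) ∧
      g = Matrix.det (Matrix.of fun r k : Fin (M+1) =>
        Ent j ((ρ r).1 : MvPolynomial (ι ⊕ ι) ℂ) (ρ r).2 (k : ℕ))} with hF'
  refine ⟨F', ?_, ?_, ?_⟩
  · rintro g ⟨M, ρ, hρ, rfl⟩
    refine ⟨∑ r : Fin (M+1), Function.update (Dd (ρ r).1) j 0, ?_⟩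
    rw [Matrix.det_apply']
    refine multiHomog_sum _ _ _ fun σ _ => ?_
    have h1 := mh_mul (multiHomog_intCast ((Equiv.Perm.sign σ : ℤ)))
      (multiHomog_prod Finset.univ
        (fun k : Fin (M+1) => Ent j ((ρ (σ k)).1 : MvPolynomial (ι ⊕ ι) ℂ) (ρ (σ k)).2 (k : ℕ))
        (fun k => Function.update (Dd (ρ (σ k)).1) j 0)
        (fun k _ => multiHomog_ent (hDd _) _ _))
    have h2 : ((fun _ : ι => 0) + ∑ k : Fin (M+1), Function.update (Dd (ρ (σ k)).1) j 0)
        = ∑ r : Fin (M+1), Function.update (Dd (ρ r).1) j 0 := by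
      rw [Equiv.sum_comp σ (fun r => Function.update (Dd (ρ r).1) j 0)]
      funext i
      simp
    rw [h2] at h1
    exact h1
  · rintro g ⟨M, ρ, hρ, rfl⟩
    rw [Matrix.det_apply']
    refine usesOnly_sum _ _ fun σ _ => ?_
    exact usesOnly_mul (usesOnly_intCast _ _)
      (usesOnly_prod _ _ fun k _ => usesOnly_ent (hFu _ (ρ (σ k)).1.2) _ _)
  · ext p
    constructor
    · rintro ⟨z, hz⟩ g ⟨M, ρ, hρ, rfl⟩
      set x := rp p with hx
      set a := z.rep.1 with ha
      set b := z.rep.2 with hb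
      rw [pEval_eq_rp, RingHom.map_det]
      set A : Matrix (Fin (M+1)) (Fin (M+1)) ℂ :=
        (Matrix.of fun r k : Fin (M+1) =>
          Ent j ((ρ r).1 : MvPolynomial (ι ⊕ ι) ℂ) (ρ r).2 (k : ℕ)).map (eval x) with hA
      set v : Fin (M+1) → ℂ := fun k => a ^ (k : ℕ) * b ^ (M - (k : ℕ)) with hv
      have hvne : v ≠ 0 := by
        have hab : ¬(a = 0 ∧ b = 0) := by
          intro ⟨h1, h2⟩
          exact Projectivization.rep_nonzero z (Prod.ext h1 h2)
        intro hv0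
        by_cases ha0 : a = 0
        · have hb0 : b ≠ 0 := fun h => hab ⟨ha0, h⟩
          have hz1 := congrFun hv0 ⟨0, by omega⟩
          simp only [hv, Pi.zero_apply] at hz1
          rw [pow_zero, one_mul] at hz1
          have : b ^ (M - (0:ℕ)) = 0 := by simpa using hz1
          exact hb0 (pow_eq_zero_iff'.1 this).1
        · have hz1 := congrFun hv0 (Fin.last M)
          simp only [hv, Pi.zero_apply, Fin.val_last] at hz1
          rw [Nat.sub_self, pow_zero, mul_one] at hz1
          exact ha0 (pow_eq_zero_iff'.1 hz1).1
      have hAv : A.mulVec v = 0 := by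
        funext r
        rw [Matrix.mulVec, dotProduct]
        simp only [hA, Matrix.map_apply, Matrix.of_apply, Pi.zero_apply]
        set f := (ρ r).1 with hfr
        set jj := (ρ r).2 with hjjr
        set P := psi j x (f : MvPolynomial (ι ⊕ ι) ℂ) with hP
        have hsum : ∑ k : Fin (M+1), eval x (Ent j (f : MvPolynomial (ι ⊕ ι) ℂ) jj (k : ℕ)) * v k
            = homEvalM a b M (P * Polynomial.X ^ jj) := by
          rw [homEvalM, ← Fin.sum_univ_eq_sum_range]
          refine Finset.sum_congr rfl fun k _ => ?_
          rw [eval_ent, hv]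
          ring
        rw [hsum]
        have hjM : jj + Dd f j ≤ M := hρ r
        have hMeq : M = (M - jj) + jj := by omega
        rw [hMeq, homEvalM_mul_X_pow, homEvalM_stretch (natDegree_psi_le (hDd f)) (by omega)]
        have hz0 : homEvalM a b (Dd f j) P = 0 := by
          rw [← pEval_update (hDd f) (hFu _ f.2)]
          exact hz _ f.2
        rw [hz0]
        ring
      exact Matrix.exists_mulVec_eq_zero_iff.1 ⟨v, hvne, hAv⟩
    · intro hp
      by_contra hno
      have hno' : ∀ z : P1, ∃ f : ↥F, pEval (f : MvPolynomial (ι ⊕ ι) ℂ)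
          (Function.update p j z) ≠ 0 := by
        intro z
        by_contra hz
        push_neg at hz
        refine hno ⟨z, ?_⟩
        intro f hf
        exact hz ⟨f, hf⟩
      set x := rp p with hx
      set P : ↥F → Polynomial ℂ := fun f => psi j x (f : MvPolynomial (ι ⊕ ι) ℂ) with hPdef
      set D : ↥F → ℕ := fun f => Dd f j with hDdef
      have hdeg : ∀ f ∈ (Set.univ : Set ↥F), (P f).natDegree ≤ D f :=
        fun f _ => natDegree_psi_le (hDd f)
      have hnz : ∀ a b : ℂ, (a, b) ≠ 0 →
          ∃ f ∈ (Set.univ : Set ↥F), homEvalM a b (D f) (P f) ≠ 0 := by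
        intro a b hab
        set z := Projectivization.mk ℂ (a, b) hab with hzdef
        obtain ⟨f, hne⟩ := hno' z
        refine ⟨f, Set.mem_univ _, ?_⟩
        rw [pEval_update (hDd f) (hFu _ f.2)] at hne
        obtain ⟨c, hc⟩ := Projectivization.exists_smul_eq_mk_rep ℂ (a, b) hab
        have h1 : z.rep.1 = (c : ℂ) * a := by rw [hzdef, ← hc]; rfl
        have h2 : z.rep.2 = (c : ℂ) * b := by rw [hzdef, ← hc]; rfl
        rw [h1, h2, homEvalM_smul] at hne
        intro h0
        rw [h0, mul_zero] at hne
        exact hne rfl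
      obtain ⟨M, hMspan⟩ := span_lemma (Set.univ : Set ↥F) P D hdeg hnz
      set coeffv : Polynomial ℂ →ₗ[ℂ] (Fin (M+1) → ℂ) :=
        LinearMap.pi fun k : Fin (M+1) => Polynomial.lcoeff ℂ (k : ℕ) with hcoeffv
      set T : Set (Polynomial ℂ) :=
        {g | ∃ f ∈ (Set.univ : Set ↥F), ∃ jj, jj + D f ≤ M ∧ g = P f * Polynomial.X ^ jj}
        with hT
      have htop : Submodule.span ℂ (coeffv '' T) = ⊤ := by
        rw [eq_top_iff]
        rintro v -
        have hE : ∃ E : Polynomial ℂ, E.natDegree ≤ M ∧ coeffv E = v := by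
          refine ⟨∑ k : Fin (M+1), Polynomial.monomial (k : ℕ) (v k), ?_, ?_⟩
          · refine (Polynomial.natDegree_sum_le _ _).trans ?_
            rw [Finset.fold_max_le]
            refine ⟨Nat.zero_le _, fun k _ => ?_⟩
            refine (Polynomial.natDegree_monomial_le _).trans ?_
            exact Nat.le_of_lt_succ k.2
          · funext k0
            simp only [hcoeffv, LinearMap.pi_apply, Polynomial.lcoeff_apply]
            rw [Polynomial.finset_sum_coeff]
            rw [Finset.sum_eq_single k0 (fun k _ hkne => by
                rw [Polynomial.coeff_monomial, if_neg (fun h => hkne (Fin.ext h))])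
              (fun h => absurd (Finset.mem_univ _) h)]
            rw [Polynomial.coeff_monomial, if_pos rfl]
        obtain ⟨E, hdegE, rfl⟩ := hE
        exact Submodule.apply_mem_span_image_of_mem_span coeffv (hMspan E hdegE)
      obtain ⟨s, hsub, hspan_s, hli⟩ := exists_linearIndependent ℂ (coeffv '' T)
      rw [htop] at hspan_s
      let bs : Module.Basis ↥s ℂ (Fin (M+1) → ℂ) :=
        Module.Basis.mk hli (by rw [Subtype.range_coe, hspan_s])
      haveI : Fintype ↥s := FiniteDimensional.fintypeBasisIndex bs
      have hcard : Fintype.card ↥s = M + 1 := by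
        have h1 := Module.finrank_eq_card_basis bs
        rw [Module.finrank_fin_fun] at h1
        omega
      set eF : Fin (M+1) ≃ ↥s := (Fintype.equivFinOfCardEq hcard).symm with heF
      have hdata : ∀ w : ↥s, ∃ fj : ↥F × ℕ, fj.2 + Dd fj.1 j ≤ M ∧
          (w : Fin (M+1) → ℂ) = coeffv (P fj.1 * Polynomial.X ^ fj.2) := by
        intro w
        obtain ⟨g, hgT, hgeq⟩ := hsub w.2
        obtain ⟨f, -, jj, hjj, rfl⟩ := hgT
        exact ⟨(f, jj), hjj, hgeq.symm⟩
      choose sel hsel1 hsel2 using hdata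
      set ρ : Fin (M+1) → ↥F × ℕ := fun r => sel (eF r) with hρdef
      set g0 : MvPolynomial (ι ⊕ ι) ℂ := Matrix.det (Matrix.of fun r k : Fin (M+1) =>
        Ent j ((ρ r).1 : MvPolynomial (ι ⊕ ι) ℂ) (ρ r).2 (k : ℕ)) with hg0
      have hg0F' : g0 ∈ F' := ⟨M, ρ, fun r => hsel1 _, rfl⟩
      have hg0ne : pEval g0 p ≠ 0 := by
        rw [pEval_eq_rp, hg0, RingHom.map_det]
        set A : Matrix (Fin (M+1)) (Fin (M+1)) ℂ :=
          (Matrix.of fun r k : Fin (M+1) =>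
            Ent j ((ρ r).1 : MvPolynomial (ι ⊕ ι) ℂ) (ρ r).2 (k : ℕ)).map (eval x) with hA
        have hArow : ∀ r k, A r k = ((eF r : Fin (M+1) → ℂ)) k := by
          intro r k
          rw [hA, Matrix.map_apply, Matrix.of_apply, eval_ent, hsel2 (eF r)]
          simp only [hcoeffv, LinearMap.pi_apply, Polynomial.lcoeff_apply, hρdef, hPdef]
          try rfl
        intro hdet0
        obtain ⟨u, hu, hAu⟩ := Matrix.exists_mulVec_eq_zero_iff.2 hdet0
        have hrow0 : ∀ r0 : Fin (M+1), ∑ k : Fin (M+1), A r0 k * u k = 0 := by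
          intro r0
          have h := congrFun hAu r0
          simpa [Matrix.mulVec, dotProduct, hA] using h
        set φ : (Fin (M+1) → ℂ) →ₗ[ℂ] ℂ :=
          ∑ k : Fin (M+1), u k • (LinearMap.proj k : (Fin (M+1) → ℂ) →ₗ[ℂ] ℂ) with hφ
        have hφapp : ∀ w : Fin (M+1) → ℂ, φ w = ∑ k : Fin (M+1), w k * u k := by
          intro w
          rw [hφ, LinearMap.sum_apply]
          refine Finset.sum_congr rfl fun k _ => ?_
          rw [LinearMap.smul_apply, LinearMap.proj_apply, smul_eq_mul, mul_comm]
        have hker : ∀ w ∈ s, φ w = 0 := by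
          intro w hw
          rw [hφapp, ← hrow0 (eF.symm ⟨w, hw⟩)]
          refine Finset.sum_congr rfl fun k _ => ?_
          rw [hArow (eF.symm ⟨w, hw⟩) k, Equiv.apply_symm_apply]
        have hφ0 : φ = 0 := by
          have hle : Submodule.span ℂ s ≤ LinearMap.ker φ :=
            Submodule.span_le.2 fun w hw => LinearMap.mem_ker.2 (hker w hw)
          rw [hspan_s] at hle
          ext w
          exact LinearMap.mem_ker.1 (hle (Submodule.mem_top))
        obtain ⟨k0, hk0⟩ := Function.ne_iff.1 hu
        have := congrFun (congrArg DFunLike.coe hφ0) (Pi.single k0 1)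
        rw [hφapp] at this
        simp only [LinearMap.zero_apply] at this
        rw [Finset.sum_eq_single k0] at this
        · rw [Pi.single_eq_same, one_mul] at this
          exact hk0 this
        · intro k _ hkne
          rw [Pi.single_eq_of_ne hkne, zero_mul]
        · intro h
          exact absurd (Finset.mem_univ _) h
      exact hg0ne (hp g0 hg0F')

end ElimOne

section Sat

variable {ι : Type*} [Fintype ι] [DecidableEq ι]

/-- Saturation of a set along the coordinates in `T`. -/
def satSet (T : Set ι) (C : Set (ι → P1)) : Set (ι → P1) :=
  {p | ∃ p' ∈ C, ∀ i ∉ T, p' i = p i}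

lemma subset_satSet (T : Set ι) (C : Set (ι → P1)) : C ⊆ satSet T C :=
  fun p hp => ⟨p, hp, fun _ _ => rfl⟩

lemma satSet_empty (C : Set (ι → P1)) : satSet (∅ : Set ι) C = C := by
  ext p
  constructor
  · rintro ⟨p', hp', hag⟩
    have : p' = p := funext fun i => hag i (Set.notMem_empty i)
    rwa [← this]
  · intro hp
    exact ⟨p, hp, fun _ _ => rfl⟩

lemma satSet_insert (j : ι) (T : Set ι) (C : Set (ι → P1)) :
    satSet (insert j T) C = {p | ∃ z : P1, Function.update p j z ∈ satSet T C} := by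
  ext p
  constructor
  · rintro ⟨p', hp', hag⟩
    refine ⟨p' j, p', hp', fun i hiT => ?_⟩
    by_cases hij : i = j
    · subst hij
      rw [Function.update_self]
    · rw [Function.update_of_ne hij]
      exact hag i (fun hmem => by
        rcases Set.mem_insert_iff.1 hmem with h | h
        · exact hij h
        · exact hiT h)
  · rintro ⟨z, p', hp', hag⟩
    refine ⟨p', hp', fun i hi => ?_⟩
    have hij : i ≠ j := fun h => hi (h ▸ Set.mem_insert _ _)
    have hiT : i ∉ T := fun h => hi (Set.mem_insert_of_mem _ h)
    rw [hag i hiT, Function.update_of_ne hij]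

lemma closedOn_satSet (T : Finset ι) :
    ∀ (W : Set ι) (C : Set (ι → P1)), ClosedOn W C → ↑T ⊆ W →
      ClosedOn (W \ ↑T) (satSet ↑T C) := by
  classical
  induction T using Finset.induction with
  | empty =>
    intro W C hC _
    rw [Finset.coe_empty, satSet_empty, Set.diff_empty]
    exact hC
  | @insert j T hj ih =>
    intro W C hC hsub
    rw [Finset.coe_insert] at hsub ⊢
    rw [satSet_insert]
    have hTW : ↑T ⊆ W := fun i hi => hsub (Set.mem_insert_of_mem _ hi)
    have h1 := elim_one (ih W C hC hTW) j
    have h2 : (W \ ↑T) \ {j} = W \ insert j ↑T := by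
      ext i
      simp only [Set.mem_diff, Set.mem_singleton_iff, Set.mem_insert_iff]
      tauto
    rwa [h2] at h1

lemma mClosure_closedOn_univ (A : Set (ι → P1)) :
    ClosedOn (Set.univ : Set ι) (mClosure A) := by
  refine ⟨Gmax A, fun f hf => hf.1, fun f hf m hm i hi => absurd (Set.mem_univ i) hi, ?_⟩
  rw [mClosure_eq]
  rfl

end Sat

end Elim

open Elim

/-- For a closed subvariety `V ⊆ ℂᴺ` and `U ⊆ {1,…,N}`: the projection of the
multiprojective closure `V̄` satisfies `π̄_U(V̄) ≠ (ℙ¹)ᵁ` iff there is a nonzero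
polynomial in the vanishing ideal of `V` involving only variables indexed by
`U`; equivalently, `π̄_U(V̄) = (ℙ¹)ᵁ` iff `I(V) ∩ ℂ[x_i : i ∈ U] = 0`. -/
theorem proj_surjective_iff_no_poly {N : ℕ} (V : Set (Fin N → ℂ))
    (hV : IsAffineVariety V) (U : Set (Fin N)) :
    projP U '' mClosure (embedAff '' V) ≠ Set.univ ↔
      ∃ f : MvPolynomial (Fin N) ℂ, f ≠ 0 ∧ (∀ v ∈ V, eval v f = 0) ∧
        ↑f.vars ⊆ U := by
  classical
  set A := embedAff '' V with hA
  constructor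
  · -- if the projection misses a point, there is a nonzero `U`-polynomial in `I(V)`
    intro hne
    by_contra hnof
    apply hne
    rw [Set.eq_univ_iff_forall]
    intro q
    -- the saturation of the closure is cut out by `U`-polynomials
    set T : Finset (Fin N) := (Set.toFinite (Uᶜ)).toFinset with hT
    have hcoe : (↑T : Set (Fin N)) = Uᶜ := Set.Finite.coe_toFinset _
    have hclosed := closedOn_satSet T Set.univ (mClosure A)
      (mClosure_closedOn_univ A) (by rw [hcoe]; exact Set.subset_univ _)
    rw [hcoe] at hclosed
    have hUdiff : (Set.univ : Set (Fin N)) \ Uᶜ = U := by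
      ext i
      simp
    rw [hUdiff] at hclosed
    obtain ⟨F', hF'd, hF'u, hSeq⟩ := hclosed
    -- every polynomial cutting the saturation is identically zero
    have hall0 : ∀ f' ∈ F', f' = (0 : MvPolynomial (Fin N ⊕ Fin N) ℂ) := by
      intro f' hf'
      by_contra hf'ne
      obtain ⟨d, hd⟩ := hF'd f' hf'
      have hvan : ∀ v ∈ V, eval v (dehom f') = 0 := by
        intro v hv
        have hmem : embedAff v ∈ satSet (Uᶜ) (mClosure A) :=
          subset_satSet _ _ (subset_mClosure A ⟨v, hv, rfl⟩)
        rw [hSeq] at hmem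
        have h0 := hmem f' hf'
        rw [pEval_embedAff hd v] at h0
        rw [eval_dehom]
        exact h0
      exact hnof ⟨dehom f', dehom_ne_zero hd hf'ne, hvan, vars_dehom_subset (hF'u f' hf')⟩
    -- hence the saturation is everything; extend `q` arbitrarily
    set pext : Fin N → P1 := fun i => if h : i ∈ U then q ⟨i, h⟩ else embedC 0 with hpext
    have hmem : pext ∈ satSet (Uᶜ) (mClosure A) := by
      rw [hSeq]
      intro f' hf'
      rw [hall0 f' hf']
      rw [pEval_eq_rp, map_zero]
    obtain ⟨p', hp'cl, hag⟩ := hmem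
    refine ⟨p', hp'cl, ?_⟩
    funext u
    have hu : (u : Fin N) ∉ Uᶜ := fun h => h u.2
    have := hag u hu
    rw [projP, this, hpext]
    simp only [u.2, dif_pos]
  · -- a nonzero `U`-polynomial in `I(V)` obstructs surjectivity
    rintro ⟨f, hf0, hfvan, hfvars⟩ huniv
    set F := homog f with hF
    set d : Fin N → ℕ := fun i => f.degreeOf i with hd
    have hdF : MultiHomog F d := multiHomog_homog f
    have hFvan : ∀ v ∈ V, pEval F (embedAff v) = 0 := by
      intro v hv
      rw [pEval_embedAff hdF v, ← eval_dehom, dehom_homog]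
      exact hfvan v hv
    -- a point where `F` does not vanish
    have hzex : ∃ z : Fin N ⊕ Fin N → ℂ, eval z F ≠ 0 := by
      by_contra hall
      push_neg at hall
      exact homog_ne_zero hf0 (MvPolynomial.funext fun x => by rw [hall x, map_zero])
    obtain ⟨z, hzne⟩ := hzex
    have hzpair : ∀ i, d i ≠ 0 → (z (Sum.inl i), z (Sum.inr i)) ≠ 0 := by
      intro i hdi hpair
      rw [Prod.mk_eq_zero] at hpair
      apply hzne
      rw [eval_eq']
      refine Finset.sum_eq_zero fun m hm => ?_
      have hsum := hdF m hm i
      have : m (Sum.inl i) ≠ 0 ∨ m (Sum.inr i) ≠ 0 := by omega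
      rcases this with h | h
      · rw [Finset.prod_eq_zero (Finset.mem_univ (Sum.inl i))
          (by rw [hpair.1, zero_pow h]), mul_zero]
      · rw [Finset.prod_eq_zero (Finset.mem_univ (Sum.inr i))
          (by rw [hpair.2, zero_pow h]), mul_zero]
    have hdU : ∀ i, d i ≠ 0 → i ∈ U := by
      intro i hdi
      refine hfvars ?_
      rw [Finset.mem_coe, MvPolynomial.mem_vars]
      by_contra hno
      push_neg at hno
      apply hdi
      simp only [hd]
      rw [MvPolynomial.degreeOf_eq_sup]
      refine Nat.le_zero.1 (Finset.sup_le fun m hm => Nat.le_zero.2 ?_)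
      by_contra hne
      exact (hno m hm) (Finsupp.mem_support_iff.2 hne)
    set p : Fin N → P1 := fun i =>
      if h : (z (Sum.inl i), z (Sum.inr i)) ≠ 0 then Projectivization.mk ℂ _ h
      else embedC 0 with hp
    have hqmem : projP U p ∈ projP U '' mClosure A := by
      rw [huniv]
      trivial
    obtain ⟨p', hp'cl, hproj⟩ := hqmem
    -- `F` vanishes at `p'` because `p' ∈ mClosure A`
    have hF0 : pEval F p' = 0 :=
      mem_mClosure hp'cl hdF (by rintro a ⟨v, hv, rfl⟩; exact hFvan v hv)
    -- but `F` cannot vanish at `p'`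
    have hrep : ∀ i, d i ≠ 0 → ∃ cc : ℂˣ,
        cc • (z (Sum.inl i), z (Sum.inr i)) = (p' i).rep := by
      intro i hdi
      have hne := hzpair i hdi
      have hpi : p' i = Projectivization.mk ℂ (z (Sum.inl i), z (Sum.inr i)) hne := by
        have h1 : p' i = p i := congrFun hproj ⟨i, hdU i hdi⟩
        rw [h1, hp]
        simp only []
        rw [dif_pos hne]
      rw [hpi]
      exact Projectivization.exists_smul_eq_mk_rep ℂ _ hne
    choose cc hcc using hrep
    set c : Fin N → ℂ := fun i => if hdi : d i ≠ 0 then (cc i hdi : ℂ) else 1 with hc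
    set x : Fin N ⊕ Fin N → ℂ := fun v =>
      if d (Sum.elim id id v) ≠ 0 then z v else rp p' v with hx
    have hrp : rp p' = fun v => c (Sum.elim id id v) * x v := by
      funext v
      cases v with
      | inl i =>
        by_cases hdi : d i ≠ 0
        · have hcceq := hcc i hdi
          simp only [rp, Sum.elim_inl, hc, hx, id_eq, dif_pos hdi, if_pos hdi, ← hcceq,
            Prod.smul_fst, Units.smul_def, smul_eq_mul]
        · simp only [rp, Sum.elim_inl, hc, hx, id_eq, dif_neg hdi, if_neg hdi, one_mul]
          exact (if_neg hdi).symm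
      | inr i =>
        by_cases hdi : d i ≠ 0
        · have hcceq := hcc i hdi
          simp only [rp, Sum.elim_inr, hc, hx, id_eq, dif_pos hdi, if_pos hdi, ← hcceq,
            Prod.smul_snd, Units.smul_def, smul_eq_mul]
        · simp only [rp, Sum.elim_inr, hc, hx, id_eq, dif_neg hdi, if_neg hdi, one_mul]
          exact (if_neg hdi).symm
    have hxz : eval x F = eval z F := by
      refine eval_congr_support x z fun m hm v hv => ?_
      have hdpos : d (Sum.elim id id v) ≠ 0 := by
        have hsum := hdF m hm (Sum.elim id id v)
        cases v with
        | inl i => simp only [Sum.elim_inl, id_eq] at *; omega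
        | inr i => simp only [Sum.elim_inr, id_eq] at *; omega
      rw [hx]
      simp only [if_pos hdpos]
    have : pEval F p' = (∏ i, c i ^ d i) * eval z F := by
      rw [pEval_eq_rp, hrp, eval_scale hdF, hxz]
    rw [hF0] at this
    have hcne : ∀ i, c i ≠ 0 := by
      intro i
      rw [hc]
      by_cases hdi : d i ≠ 0
      · simp only [dif_pos hdi]
        exact Units.ne_zero _
      · simp only [dif_neg hdi]
        exact one_ne_zero
    have hprod : (∏ i, c i ^ d i) ≠ 0 :=
      Finset.prod_ne_zero_iff.2 fun i _ => pow_ne_zero _ (hcne i)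
    exact hzne (by
      rcases mul_eq_zero.1 this.symm with h | h
      · exact absurd h hprod
      · exact h)


end
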